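/- Let L be a noncommutative Lie algebra over a field F with vertex set V = L \ Z(L), and let N : Set(V→sets) be the closed-neighborhood operator N(S) = {y ∈ L \ Z(L) : ∃ s ∈ S, ⁅y, s⁆ = 0}. Let S be a nonempty subset of V such that the subgraph of Γ(L) induced by S is connected, and suppose there is an integer d ≥ 1 with N^{d−1}(S) ⊊ N^{d}(S) = N^{d+1}(S) (the series of closed neighborhoods of S terminates at d, where N⁰(S) = S and N^{k}(S) = N(N^{k−1}(S))). Then Γ(L) is connected if and only if N^{d}(S) = V; moreover, if N^{d}(S) = V then diam(Γ(L)) ≤ 2d + diam(Γ(S)), where Γ(S) is the subgraph of Γ(L) induced by S and diameters are taken in ℕ∞. -/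

import Mathlib

/-- The commuting graph of a Lie algebra `L` over `F`: vertices are the elements of
`L` outside the center, and two distinct vertices are adjacent iff they commute. -/
def commutingGraph (F : Type*) [CommRing F] (L : Type*) [LieRing L] [LieAlgebra F L] :
    SimpleGraph {x : L // x ∉ LieAlgebra.center F L} where
  Adj x y := x ≠ y ∧ ⁅(x : L), (y : L)⁆ = 0
  symm := ⟨fun x y h => ⟨h.1.symm, by rw [← lie_skew, h.2, neg_zero]⟩⟩
  loopless := ⟨fun x h => h.1 rfl⟩

/-- The closed neighborhood operator on subsets of the vertex set of the commuting graph: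
`nbhd F L S` consists of the non-central elements commuting with some element of `S`
(it contains `S` whenever `S` consists of non-central elements, since `⁅s,s⁆ = 0`). -/
def nbhd (F : Type*) [CommRing F] (L : Type*) [LieRing L] [LieAlgebra F L] (S : Set L) :
    Set L :=
  {y : L | y ∉ LieAlgebra.center F L ∧ ∃ s ∈ S, ⁅y, s⁆ = 0}


section Aux

variable (F : Type*) [CommRing F] (L : Type*) [LieRing L] [LieAlgebra F L]

lemma nbhd_subset_noncentral (S : Set L) :
    nbhd F L S ⊆ {x : L | x ∉ LieAlgebra.center F L} := fun _ h => h.1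

lemma iterate_nbhd_subset_noncentral (S : Set L)
    (hSV : S ⊆ {x : L | x ∉ LieAlgebra.center F L}) (k : ℕ) :
    (nbhd F L)^[k] S ⊆ {x : L | x ∉ LieAlgebra.center F L} := by
  cases k with
  | zero => exact hSV
  | succ n => rw [Function.iterate_succ_apply']; exact nbhd_subset_noncentral F L _

lemma subset_iterate_nbhd (S : Set L)
    (hSV : S ⊆ {x : L | x ∉ LieAlgebra.center F L}) (k : ℕ) :
    S ⊆ (nbhd F L)^[k] S := by
  induction k with
  | zero => exact subset_rfl
  | succ n ih =>
    rw [Function.iterate_succ_apply']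
    intro s hs
    exact ⟨iterate_nbhd_subset_noncentral F L S hSV n (ih hs), s, ih hs, lie_self s⟩

/-- Distance lemma: a vertex in `N^k(S)` is within edist `k` of some vertex of `S`. -/
lemma edist_le_of_mem_iterate (S : Set L)
    (hSV : S ⊆ {x : L | x ∉ LieAlgebra.center F L}) (k : ℕ)
    (v : {x : L // x ∉ LieAlgebra.center F L}) (hv : (v : L) ∈ (nbhd F L)^[k] S) :
    ∃ s : {x : L // x ∉ LieAlgebra.center F L}, (s : L) ∈ S ∧
      (commutingGraph F L).edist v s ≤ (k : ℕ∞) := by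
  induction k generalizing v with
  | zero =>
    exact ⟨v, hv, by rw [SimpleGraph.edist_self]; exact zero_le⟩
  | succ n ih =>
    rw [Function.iterate_succ_apply'] at hv
    obtain ⟨hvnc, t, ht, hbr⟩ := hv
    have htnc : t ∉ LieAlgebra.center F L := iterate_nbhd_subset_noncentral F L S hSV n ht
    obtain ⟨s, hs, hst⟩ := ih ⟨t, htnc⟩ ht
    refine ⟨s, hs, ?_⟩
    by_cases hvt : v = (⟨t, htnc⟩ : {x : L // x ∉ LieAlgebra.center F L})
    · subst hvt
      exact hst.trans (by exact_mod_cast Nat.cast_le.mpr (Nat.le_succ n))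
    · have hadj : (commutingGraph F L).Adj v ⟨t, htnc⟩ := ⟨hvt, hbr⟩
      calc (commutingGraph F L).edist v s
          ≤ (commutingGraph F L).edist v ⟨t, htnc⟩ +
            (commutingGraph F L).edist ⟨t, htnc⟩ s := SimpleGraph.edist_triangle
        _ ≤ 1 + (n : ℕ∞) := by
            gcongr
            · exact le_of_eq (SimpleGraph.edist_eq_one_iff_adj.mpr hadj)
        _ = ((n + 1 : ℕ) : ℕ∞) := by push_cast; ring

/-- Walks stay inside a nbhd-closed set. -/
lemma mem_of_walk (T : Set L) (hT : nbhd F L T = T)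
    {a b : {x : L // x ∉ LieAlgebra.center F L}} (w : (commutingGraph F L).Walk a b)
    (ha : (a : L) ∈ T) : (b : L) ∈ T := by
  induction w with
  | nil => exact ha
  | cons h p ih =>
    rename_i u v c
    apply ih
    rw [← hT]
    exact ⟨v.2, u, ha, by rw [← lie_skew, h.2, neg_zero]⟩

end Aux

/-- let `S` be a nonempty set of vertices of the commuting graph of `L` inducing
a connected subgraph, and suppose the series of closed neighborhoods of `S` terminates at
`d ≥ 1`. Then `Γ(L)` is connected iff `N^d(S)` is the whole vertex set, in which case
`diam Γ(L) ≤ 2d + diam Γ(S)`. -/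
theorem stmt8 (F : Type*) [Field F] (L : Type*) [LieRing L] [LieAlgebra F L]
    (hnc : ∃ x y : L, ⁅x, y⁆ ≠ 0)
    (S : Set L) (hS : S.Nonempty) (hSV : S ⊆ {x : L | x ∉ LieAlgebra.center F L})
    (hconn : ((commutingGraph F L).induce {v : {x : L // x ∉ LieAlgebra.center F L} |
      (v : L) ∈ S}).Connected)
    (d : ℕ) (hd : 1 ≤ d)
    (hlt : (nbhd F L)^[d - 1] S ⊂ (nbhd F L)^[d] S)
    (hterm : (nbhd F L)^[d] S = (nbhd F L)^[d + 1] S) :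
    ((commutingGraph F L).Connected ↔
        (nbhd F L)^[d] S = {x : L | x ∉ LieAlgebra.center F L}) ∧
      ((nbhd F L)^[d] S = {x : L | x ∉ LieAlgebra.center F L} →
        (commutingGraph F L).ediam ≤ 2 * (d : ℕ∞) +
          ((commutingGraph F L).induce {v : {x : L // x ∉ LieAlgebra.center F L} |
            (v : L) ∈ S}).ediam) := by
  set V := {x : L // x ∉ LieAlgebra.center F L}
  set G := commutingGraph F L with hG
  set Sv : Set V := {v : V | (v : L) ∈ S} with hSv
  -- the fixed-point property
  have hfix : nbhd F L ((nbhd F L)^[d] S) = (nbhd F L)^[d] S := by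
    conv_rhs => rw [hterm]
    rw [Function.iterate_succ_apply']
  obtain ⟨s0, hs0⟩ := hS
  have hs0nc : s0 ∉ LieAlgebra.center F L := hSV hs0
  -- hom from induced graph to G
  let f : (G.induce Sv) →g G := ⟨Subtype.val, fun h => h⟩
  -- reachability from any vertex of N^d(S) to S
  have hreach : ∀ v : V, (v : L) ∈ (nbhd F L)^[d] S →
      ∃ s : V, (s : L) ∈ S ∧ G.Reachable v s ∧ G.edist v s ≤ (d : ℕ∞) := by
    intro v hv
    obtain ⟨s, hs, hle⟩ := edist_le_of_mem_iterate F L S hSV d v hv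
    exact ⟨s, hs, SimpleGraph.reachable_of_edist_ne_top
      (ne_top_of_le_ne_top (ENat.coe_ne_top d) hle), hle⟩
  -- reachability between elements of S (through the induced graph)
  have hSreach : ∀ a b : V, (a : L) ∈ S → (b : L) ∈ S → G.Reachable a b := by
    intro a b ha hb
    have := hconn.preconnected ⟨a, ha⟩ ⟨b, hb⟩
    exact this.map f
  constructor
  · constructor
    · intro hc
      apply Set.Subset.antisymm (iterate_nbhd_subset_noncentral F L S hSV d)
      intro x hx
      have hs0d : s0 ∈ (nbhd F L)^[d] S := subset_iterate_nbhd F L S hSV d hs0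
      obtain ⟨w⟩ := hc.preconnected ⟨s0, hs0nc⟩ ⟨x, hx⟩
      exact mem_of_walk F L _ hfix w hs0d
    · intro hV
      rw [SimpleGraph.connected_iff]
      refine ⟨?_, ⟨⟨s0, hs0nc⟩⟩⟩
      intro u v
      have hu : (u : L) ∈ (nbhd F L)^[d] S := by rw [hV]; exact u.2
      have hv : (v : L) ∈ (nbhd F L)^[d] S := by rw [hV]; exact v.2
      obtain ⟨s1, hs1, hr1, -⟩ := hreach u hu
      obtain ⟨s2, hs2, hr2, -⟩ := hreach v hv
      exact hr1.trans ((hSreach s1 s2 hs1 hs2).trans hr2.symm)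
  · intro hV
    rw [SimpleGraph.ediam_le_iff]
    intro u v
    have hu : (u : L) ∈ (nbhd F L)^[d] S := by rw [hV]; exact u.2
    have hv : (v : L) ∈ (nbhd F L)^[d] S := by rw [hV]; exact v.2
    obtain ⟨s1, hs1, -, he1⟩ := hreach u hu
    obtain ⟨s2, hs2, -, he2⟩ := hreach v hv
    have hmid : G.edist s1 s2 ≤ (G.induce Sv).ediam := by
      obtain ⟨w, hw⟩ := hconn.exists_walk_length_eq_edist ⟨s1, hs1⟩ ⟨s2, hs2⟩
      calc G.edist s1 s2 ≤ ((w.map f).length : ℕ∞) := SimpleGraph.edist_le _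
        _ = (w.length : ℕ∞) := by rw [SimpleGraph.Walk.length_map]
        _ = (G.induce Sv).edist ⟨s1, hs1⟩ ⟨s2, hs2⟩ := hw
        _ ≤ (G.induce Sv).ediam := SimpleGraph.edist_le_ediam
    calc G.edist u v ≤ G.edist u s1 + G.edist s1 v := SimpleGraph.edist_triangle
      _ ≤ G.edist u s1 + (G.edist s1 s2 + G.edist s2 v) := by
          gcongr; exact SimpleGraph.edist_triangle
      _ ≤ (d : ℕ∞) + ((G.induce Sv).ediam + (d : ℕ∞)) := by
          gcongr
          rw [SimpleGraph.edist_comm]; exact he2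
      _ = 2 * (d : ℕ∞) + (G.induce Sv).ediam := by ring
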